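/- The trace distance between the mixed states ρ⁰_odd = (1/(2^{n-1}·2^n)) Σ_{k ∈ Ω_n} Σ_{i ∈ Z_{2^n}} ρ⁰_{k,i} and ρ¹_odd = (1/(2^{n-1}·2^n)) Σ_{k ∈ Ω_n} Σ_{i ∈ Z_{2^n}} ρ¹_{k,i} equals 1/2^{n-1}. -/

import Mathlib

open Matrix Finset
open scoped ComplexOrder Kronecker

/-- The old Mathlib `Matrix.PosSemidef.sqrt` (removed upstream), with its original definition. -/
noncomputable def posSemidefSqrt {ι : Type*} [Fintype ι] [DecidableEq ι] {A : Matrix ι ι ℂ}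
    (hA : A.PosSemidef) : Matrix ι ι ℂ :=
  hA.1.eigenvectorUnitary.1 * diagonal ((↑) ∘ (√·) ∘ hA.1.eigenvalues) *
    (star hA.1.eigenvectorUnitary : Matrix ι ι ℂ)

/-- Trace norm `tr √(Aᴴ A)` of a complex square matrix. -/
noncomputable def traceNorm {ι : Type*} [Fintype ι] [DecidableEq ι] (A : Matrix ι ι ℂ) : ℝ :=
  ((posSemidefSqrt (Matrix.posSemidef_conjTranspose_mul_self A)).trace).re

/-- Bitwise XOR on bit strings. -/
def xo {n : ℕ} (i k : Fin n → Bool) : Fin n → Bool := fun j => xor (i j) (k j)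

/-- Hamming weight of a bit string. -/
def wt {n : ℕ} (i : Fin n → Bool) : ℕ := (Finset.univ.filter fun j => i j = true).card

/-- The rank-one operator `|i⟩⟨j|`. -/
def ketbra {n : ℕ} (i j : Fin n → Bool) : Matrix (Fin n → Bool) (Fin n → Bool) ℂ :=
  Matrix.single i j 1

/-- `ρ⁰_{k,i} = ½(|i⟩+|i⊕k⟩)(⟨i|+⟨i⊕k|)`. -/
noncomputable def rho0 {n : ℕ} (k i : Fin n → Bool) : Matrix (Fin n → Bool) (Fin n → Bool) ℂ :=
  (1/2 : ℂ) • (ketbra i i + ketbra i (xo i k) + ketbra (xo i k) i + ketbra (xo i k) (xo i k))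

/-- `ρ¹_{k,i} = ½(|i⟩-|i⊕k⟩)(⟨i|-⟨i⊕k|)`. -/
noncomputable def rho1 {n : ℕ} (k i : Fin n → Bool) : Matrix (Fin n → Bool) (Fin n → Bool) ℂ :=
  (1/2 : ℂ) • (ketbra i i - ketbra i (xo i k) - ketbra (xo i k) i + ketbra (xo i k) (xo i k))

/-- `Ω_n`, the set of bit strings of odd Hamming weight. -/
def Omega (n : ℕ) : Finset (Fin n → Bool) := Finset.univ.filter fun k => Odd (wt k)
/-- The averaged state `ρᵇ_odd`. -/
noncomputable def rhoOdd (n : ℕ) (b : Bool) : Matrix (Fin n → Bool) (Fin n → Bool) ℂ :=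
  ((1 : ℂ) / (2 ^ (n-1) * 2 ^ n)) •
    ∑ k ∈ Omega n, ∑ i : Fin n → Bool, (if b then rho1 k i else rho0 k i)

def parz {n : ℕ} (x : Fin n → Bool) : ZMod 2 := ∑ j, if x j then 1 else 0

lemma parz_xo {n : ℕ} (x y : Fin n → Bool) : parz (xo x y) = parz x + parz y := by
  unfold parz xo
  rw [← Finset.sum_add_distrib]
  refine Finset.sum_congr rfl fun j _ => ?_
  cases x j <;> cases y j <;> simp <;> decide

lemma odd_wt_iff {n : ℕ} (x : Fin n → Bool) : Odd (wt x) ↔ parz x = 1 := by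
  have h1 : ((wt x : ℕ) : ZMod 2) = parz x := by
    unfold wt parz
    rw [Finset.card_filter]
    push_cast
    exact Finset.sum_congr rfl fun j _ => by cases x j <;> simp
  rw [← h1, Nat.odd_iff, ← ZMod.natCast_mod]
  rcases Nat.mod_two_eq_zero_or_one (wt x) with h | h <;> rw [h] <;> simp <;> decide

lemma xo_xo_cancel {n : ℕ} (a b : Fin n → Bool) : xo (xo a b) b = a := by
  funext j; simp [xo]

lemma xo_eq_iff {n : ℕ} (a k b : Fin n → Bool) : xo a k = b ↔ k = xo a b := by
  constructor <;> rintro rfl <;> funext j <;> simp [xo]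

lemma card_parz {n : ℕ} (hn : 1 ≤ n) (v : ZMod 2) :
    (Finset.univ.filter fun k : Fin n → Bool => parz k = v).card = 2 ^ (n - 1) := by
  set e : Fin n → Bool := fun j => decide (j = (⟨0, hn⟩ : Fin n)) with he
  have hpe : parz e = 1 := by
    unfold parz
    simp only [he, decide_eq_true_eq]
    rw [Finset.sum_ite_eq' Finset.univ (⟨0, hn⟩ : Fin n) (fun _ => (1 : ZMod 2))]
    simp
  have key : ∀ w : ZMod 2,
      (Finset.univ.filter fun k : Fin n → Bool => parz k = w).card =
      (Finset.univ.filter fun k : Fin n → Bool => parz k = w + 1).card := by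
    intro w
    refine Finset.card_bij' (fun k _ => xo k e) (fun k _ => xo k e) ?_ ?_ ?_ ?_
    · intro k hk
      simp only [Finset.mem_filter, Finset.mem_univ, true_and] at hk ⊢
      rw [parz_xo, hk, hpe]
    · intro k hk
      simp only [Finset.mem_filter, Finset.mem_univ, true_and] at hk ⊢
      rw [parz_xo, hk, hpe]
      have h11 : ∀ u : ZMod 2, u + 1 + 1 = u := by decide
      exact h11 w
    · intro k _; exact xo_xo_cancel k e
    · intro k _; exact xo_xo_cancel k e
  have htot : (Finset.univ.filter fun k : Fin n → Bool => parz k = 0).card +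
      (Finset.univ.filter fun k : Fin n → Bool => parz k = 1).card = 2 ^ n := by
    have hne : ∀ x : ZMod 2, (¬ x = 0) ↔ x = 1 := by decide
    rw [show (Finset.univ.filter fun k : Fin n → Bool => parz k = 1) =
        (Finset.univ.filter fun k : Fin n → Bool => ¬ parz k = 0) by
      apply Finset.filter_congr; intro k _; simp [hne]]
    rw [Finset.card_filter_add_card_filter_not]
    simp [Fintype.card_fun]
  have h01 := key 0
  norm_num at h01
  have : (Finset.univ.filter fun k : Fin n → Bool => parz k = 0).card = 2 ^ (n-1) := by
    rw [h01] at htot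
    have : 2 ^ n = 2 ^ (n-1) * 2 := by
      rw [← pow_succ]; congr 1; omega
    omega
  have hv : ∀ u : ZMod 2, u = 0 ∨ u = 1 := by decide
  rcases hv v with rfl | rfl
  · exact this
  · rw [← h01]; exact this

lemma xo_comm {n : ℕ} (a b : Fin n → Bool) : xo a b = xo b a := by
  funext j; simp [xo, Bool.xor_comm]

lemma eq_xo_iff {n : ℕ} (a b k : Fin n → Bool) : a = xo b k ↔ k = xo b a := by
  rw [eq_comm, xo_eq_iff]

/-- the constant -/
noncomputable def cR (n : ℕ) : ℝ := 2 / (2 ^ (n-1) * 2 ^ n)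

lemma cR_nonneg (n : ℕ) : 0 ≤ cR n := by unfold cR; positivity

lemma diff_apply {n : ℕ} (a b : Fin n → Bool) :
    (rhoOdd n false - rhoOdd n true) a b =
      ((cR n : ℝ) : ℂ) * (if parz a + parz b = 1 then 1 else 0) := by
  have h1 : ∀ k i : Fin n → Bool, rho0 k i a b - rho1 k i a b =
      (if i = a ∧ xo i k = b then (1:ℂ) else 0) +
      (if xo i k = a ∧ i = b then (1:ℂ) else 0) := by
    intro k i
    simp only [rho0, rho1, ketbra, Matrix.single, Matrix.smul_apply, Matrix.add_apply,
      Matrix.sub_apply, Matrix.of_apply, smul_eq_mul]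
    ring
  have h2 : ∀ k : Fin n → Bool,
      (∑ i : Fin n → Bool, rho0 k i a b) - (∑ i : Fin n → Bool, rho1 k i a b) =
      (if k = xo a b then (1:ℂ) else 0) + (if k = xo a b then (1:ℂ) else 0) := by
    intro k
    rw [← Finset.sum_sub_distrib]
    simp only [h1]
    rw [Finset.sum_add_distrib]
    congr 1
    · rw [show (∑ i : Fin n → Bool, if i = a ∧ xo i k = b then (1:ℂ) else 0) =
          ∑ i : Fin n → Bool, if i = a then (if k = xo a b then (1:ℂ) else 0) else 0 by
        refine Finset.sum_congr rfl fun i _ => ?_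
        by_cases hi : i = a
        · subst hi; simp [xo_eq_iff, eq_xo_iff, xo_comm]
        · simp [hi]]
      rw [Finset.sum_ite_eq' Finset.univ a]
      simp
    · rw [show (∑ i : Fin n → Bool, if xo i k = a ∧ i = b then (1:ℂ) else 0) =
          ∑ i : Fin n → Bool, if i = b then (if k = xo a b then (1:ℂ) else 0) else 0 by
        refine Finset.sum_congr rfl fun i _ => ?_
        by_cases hi : i = b
        · subst hi; simp [xo_eq_iff, eq_xo_iff, xo_comm]
        · simp [hi]]
      rw [Finset.sum_ite_eq' Finset.univ b]
      simp
  simp only [rhoOdd, Bool.false_eq_true, eq_self_iff_true, if_true, if_false,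
    Matrix.sub_apply, Matrix.smul_apply, smul_eq_mul]
  rw [← mul_sub]
  simp only [Matrix.sum_apply]
  rw [← Finset.sum_sub_distrib]
  simp only [h2]
  rw [Finset.sum_add_distrib, Finset.sum_ite_eq' (Omega n) (xo a b)]
  have hmem : (xo a b ∈ Omega n) ↔ (parz a + parz b = 1) := by
    simp only [Omega, Finset.mem_filter, Finset.mem_univ, true_and, odd_wt_iff, parz_xo]
  unfold cR
  by_cases h : parz a + parz b = 1
  · rw [if_pos (hmem.mpr h), if_pos h]
    push_cast
    ring
  · rw [if_neg (fun hc => h (hmem.mp hc)), if_neg h]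
    push_cast
    ring

lemma sum_indicator_parz {n : ℕ} (hn : 1 ≤ n) (v : ZMod 2) :
    (∑ k : Fin n → Bool, if parz k = v then (1:ℂ) else 0) = (2:ℂ) ^ (n-1) := by
  rw [Finset.sum_boole]
  rw [card_parz hn v]
  push_cast
  ring

lemma gram_apply {n : ℕ} (hn : 1 ≤ n) (a b : Fin n → Bool) :
    ((rhoOdd n false - rhoOdd n true)ᴴ * (rhoOdd n false - rhoOdd n true)) a b =
      ((cR n : ℝ) : ℂ)^2 * 2^(n-1) * (if parz a = parz b then 1 else 0) := by
  rw [Matrix.mul_apply]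
  simp only [Matrix.conjTranspose_apply, diff_apply]
  have hstar : ∀ k : Fin n → Bool, star (((cR n : ℝ) : ℂ) * (if parz k + parz a = 1 then (1:ℂ) else 0)) =
      ((cR n : ℝ) : ℂ) * (if parz k + parz a = 1 then (1:ℂ) else 0) := by
    intro k
    rw [star_mul']
    congr 1
    · exact Complex.conj_ofReal _
    · rw [apply_ite (star : ℂ → ℂ), star_one, star_zero]
  simp only [hstar]
  have hcond : ∀ u x y : ZMod 2, ((u + x = 1) ∧ (u + y = 1)) ↔ ((x = y) ∧ u = 1 + x) := by decide
  have hterm : ∀ k : Fin n → Bool,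
      (((cR n : ℝ) : ℂ) * (if parz k + parz a = 1 then (1:ℂ) else 0)) *
      (((cR n : ℝ) : ℂ) * (if parz k + parz b = 1 then (1:ℂ) else 0)) =
      ((cR n : ℝ) : ℂ)^2 * (if parz a = parz b then (if parz k = 1 + parz a then (1:ℂ) else 0) else 0) := by
    intro k
    rcases hcond (parz k) (parz a) (parz b) with ⟨h1, h2⟩
    by_cases hab : parz a = parz b
    · by_cases hk : parz k = 1 + parz a
      · rw [if_pos hab, if_pos hk]
        have c1 := h2 ⟨hab, hk⟩
        rw [if_pos c1.1, if_pos c1.2]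
        ring
      · have : ¬ (parz k + parz a = 1 ∧ parz k + parz b = 1) := fun hc => hk (h1 hc).2
        rw [if_pos hab, if_neg hk]
        by_cases hx : parz k + parz a = 1
        · rw [if_pos hx, if_neg (fun hy => this ⟨hx, hy⟩)]; ring
        · rw [if_neg hx]; ring
    · have : ¬ (parz k + parz a = 1 ∧ parz k + parz b = 1) := fun hc => hab (h1 hc).1
      rw [if_neg hab]
      by_cases hx : parz k + parz a = 1
      · rw [if_pos hx, if_neg (fun hy => this ⟨hx, hy⟩)]; ring
      · rw [if_neg hx]; ring
  simp only [hterm]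
  rw [← Finset.mul_sum]
  by_cases hab : parz a = parz b
  · simp only [if_pos hab]
    rw [sum_indicator_parz hn]
    ring
  · simp only [if_neg hab]
    simp

/-- the candidate square root -/
noncomputable def Dmat (n : ℕ) : Matrix (Fin n → Bool) (Fin n → Bool) ℂ :=
  Matrix.of fun a b => ((cR n : ℝ) : ℂ) * (if parz a = parz b then 1 else 0)

lemma Dmat_posSemidef (n : ℕ) : (Dmat n).PosSemidef := by
  set α : ℝ := Real.sqrt (cR n / 2) with hα
  set B : Matrix (Fin 2) (Fin n → Bool) ℂ :=
    Matrix.of fun r k => if r = 0 then ((α:ℝ):ℂ) else ((α:ℝ):ℂ) * (if parz k = 0 then 1 else -1) with hB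
  have hα2 : ((α:ℝ):ℂ) * ((α:ℝ):ℂ) = ((cR n / 2 : ℝ) : ℂ) := by
    rw [← Complex.ofReal_mul, hα, Real.mul_self_sqrt (by have := cR_nonneg n; linarith)]
  have hD : Dmat n = Bᴴ * B := by
    ext a b
    rw [Matrix.mul_apply, Fin.sum_univ_two]
    have hv : ∀ u : ZMod 2, u = 0 ∨ u = 1 := by decide
    have hne : (0 : ZMod 2) ≠ 1 := by decide
    rcases hv (parz a) with h1 | h1 <;> rcases hv (parz b) with h2 | h2 <;>
      simp [hB, Dmat, h1, h2, hne, Ne.symm hne, Complex.conj_ofReal, hα2] <;>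
      push_cast <;> ring_nf
  rw [hD]
  exact Matrix.posSemidef_conjTranspose_mul_self B

lemma Dmat_sq {n : ℕ} (hn : 1 ≤ n) :
    Dmat n ^ 2 = (rhoOdd n false - rhoOdd n true)ᴴ * (rhoOdd n false - rhoOdd n true) := by
  ext a b
  rw [pow_two, Matrix.mul_apply, gram_apply hn]
  have hterm : ∀ k : Fin n → Bool, Dmat n a k * Dmat n k b =
      ((cR n : ℝ) : ℂ)^2 * (if parz a = parz b then (if parz k = parz a then (1:ℂ) else 0) else 0) := by
    intro k
    simp only [Dmat, Matrix.of_apply]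
    by_cases hab : parz a = parz b
    · rw [if_pos hab]
      by_cases hk : parz k = parz a
      · rw [if_pos hk, if_pos hk.symm, if_pos (hk.trans hab)]; ring
      · rw [if_neg hk, if_neg (fun h => hk h.symm)]; ring
    · rw [if_neg hab]
      by_cases hk : parz k = parz a
      · rw [if_pos hk.symm, if_neg (fun h => hab (hk.symm.trans h))]; ring
      · rw [if_neg (fun h => hk h.symm)]; ring
  simp only [hterm]
  rw [← Finset.mul_sum]
  by_cases hab : parz a = parz b
  · simp only [if_pos hab]
    rw [sum_indicator_parz hn]
    ring
  · simp only [if_neg hab]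
    simp

open scoped MatrixOrder in
lemma posSemidefSqrt_eq_of_sq {ι : Type*} [Fintype ι] [DecidableEq ι] {A D : Matrix ι ι ℂ}
    (hA : A.PosSemidef) (hD : D.PosSemidef) (h : D ^ 2 = A) : posSemidefSqrt hA = D := by
  have h' : D * D = A := by rw [← sq]; exact h
  rw [← CFC.sqrt_unique h' hD.nonneg, CFC.sqrt_eq_cfc, cfc_nnreal_eq_real _ A, hA.1.cfc_eq]
  unfold posSemidefSqrt IsHermitian.cfc
  simp only [Unitary.conjStarAlgAut_apply]
  congr 2
  funext i
  funext j
  simp [diagonal_apply, max_eq_left (hA.eigenvalues_nonneg i)]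

theorem traceDist_rhoOdd (n : ℕ) (hn : 1 ≤ n) :
    (1/2 : ℝ) * traceNorm (rhoOdd n false - rhoOdd n true) = 1 / 2 ^ (n-1) := by
  have hsqrt : posSemidefSqrt (Matrix.posSemidef_conjTranspose_mul_self
      (rhoOdd n false - rhoOdd n true)) = Dmat n :=
    posSemidefSqrt_eq_of_sq _ (Dmat_posSemidef n) (Dmat_sq hn)
  unfold traceNorm
  rw [hsqrt]
  have htr : (Dmat n).trace = (((2:ℝ)^n * cR n : ℝ) : ℂ) := by
    unfold Matrix.trace
    simp only [Matrix.diag, Dmat, Matrix.of_apply, if_pos rfl, mul_one]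
    rw [Finset.sum_const, Finset.card_univ]
    simp [Fintype.card_fun]
    try push_cast
    try ring
  rw [htr, Complex.ofReal_re]
  unfold cR
  have h1 : (2:ℝ) ^ (n-1) ≠ 0 := by positivity
  have h2 : (2:ℝ) ^ n ≠ 0 := by positivity
  field_simp
  try ring
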